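/- arXiv:2401.11259 — 4 statements merged into one kernel-verified Lean document; each statement's English description precedes it below -/
import Mathlib

section
/- Let u : ℝ × ℝ → ℂ and v : ℝ × ℝ → ℂ satisfy v(x,t) = ε conj(u(-x,t)) for ε = ±1. If (p(x,t), q(x,t)) satisfies p_x = (λ/2)p + u q and q_x = v p - (λ/2)q, then (P, Q) := (√(-ε) · conj(q(-x,t)), -ε√(-ε) · conj(p(-x,t))) satisfies P_x = (conj(λ)/2)P + u Q and Q_x = v P - (conj(λ)/2)Q. -/
open Complex

private lemma conj_neg_deriv {f : ℝ → ℂ} {d : ℂ} {x : ℝ}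
    (h : HasDerivAt f d (-x)) :
    HasDerivAt (fun y : ℝ => (starRingEnd ℂ) (f (-y))) (-(starRingEnd ℂ) d) x := by
  have h1 := HasDerivAt.scomp (𝕜 := ℝ) (𝕜' := ℝ) x h (hasDerivAt_neg x)
  have h2 := h1.star
  have h3 : star ((-1 : ℝ) • d) = -(starRingEnd ℂ) d := by
    rw [star_smul, star_trivial, neg_smul, one_smul, starRingEnd_apply]
  exact h3 ▸ h2

/-- nonlocal conjugation symmetry `v(x,t) = ε conj(u(-x,t))` of AKNS potentials
produces a new solution of the space spectral problem with spectral parameter `conj λ`. -/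
theorem akns_nonlocal_reduction_spectral
    (u v : ℝ × ℝ → ℂ) (ε : ℂ) (hε : ε = 1 ∨ ε = -1)
    (hv : ∀ x t : ℝ, v (x, t) = ε * (starRingEnd ℂ) (u (-x, t)))
    (s lam : ℂ) (hs : s ^ 2 = -ε) (t : ℝ) (p q : ℝ → ℂ)
    (hp : ∀ x : ℝ, HasDerivAt p (lam / 2 * p x + u (x, t) * q x) x)
    (hq : ∀ x : ℝ, HasDerivAt q (v (x, t) * p x - lam / 2 * q x) x) :
    (∀ x : ℝ, HasDerivAt (fun y : ℝ => s * (starRingEnd ℂ) (q (-y)))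
      ((starRingEnd ℂ) lam / 2 * (s * (starRingEnd ℂ) (q (-x)))
        + u (x, t) * (-ε * s * (starRingEnd ℂ) (p (-x)))) x) ∧
    (∀ x : ℝ, HasDerivAt (fun y : ℝ => -ε * s * (starRingEnd ℂ) (p (-y)))
      (v (x, t) * (s * (starRingEnd ℂ) (q (-x)))
        - (starRingEnd ℂ) lam / 2 * (-ε * s * (starRingEnd ℂ) (p (-x)))) x) := by
  have hεc : (starRingEnd ℂ) ε = ε := by
    rcases hε with h | h <;> simp [h]
  constructor
  · intro x
    have h := (conj_neg_deriv (hq (-x))).const_mul s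
    have key : s * -(starRingEnd ℂ) (v (-x, t) * p (-x) - lam / 2 * q (-x))
        = (starRingEnd ℂ) lam / 2 * (s * (starRingEnd ℂ) (q (-x)))
          + u (x, t) * (-ε * s * (starRingEnd ℂ) (p (-x))) := by
      rw [hv (-x) t]
      simp only [map_sub, map_mul, map_div₀, map_ofNat, hεc, neg_neg,
        Complex.conj_conj]
      ring
    exact key ▸ h
  · intro x
    have h := (conj_neg_deriv (hp (-x))).const_mul (-ε * s)
    have key : -ε * s * -(starRingEnd ℂ) (lam / 2 * p (-x) + u (-x, t) * q (-x))
        = v (x, t) * (s * (starRingEnd ℂ) (q (-x)))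
          - (starRingEnd ℂ) lam / 2 * (-ε * s * (starRingEnd ℂ) (p (-x))) := by
      rw [hv x t]
      simp only [map_add, map_mul, map_div₀, map_ofNat]
      ring
    exact key ▸ h
end

section
/- For the 2×2 complex matrix L(λ) = diag(1/2, -1/2) + Σ_{j=1}^{N} (λ-α_j)^{-1} [[p_j q_j, -p_j²],[q_j², -p_j q_j]] + Σ_{j=1}^{N} (λ+α_j)^{-1} [[-p̂_j q̂_j, -ε p̂_j²],[ε q̂_j², p̂_j q̂_j]], the identity L(λ) = D L(-λ)' D holds, where D = diag(-ε, 1), ε² = 1, and L(-λ)' denotes L(-λ) with the roles of (p_j, q_j) and (p̂_j, q̂_j) interchanged. -/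
open Matrix

/-- the Lax matrix of the odd/even reduction satisfies
`L(λ) = D L(-λ)' D` with `D = diag(-ε,1)`, where `'` interchanges the roles of
`(p_j,q_j)` and `(p̂_j,q̂_j)`. -/
theorem lax_matrix_odd_even_symmetry
    (N : ℕ) (α : Fin N → ℂ) (hα0 : ∀ j, α j ≠ 0) (hαinj : Function.Injective α)
    (p q ph qh : Fin N → ℂ) (ε lam : ℂ) (hε : ε ^ 2 = 1)
    (hlam : ∀ j, lam ≠ α j ∧ lam ≠ -α j)
    (L : (Fin N → ℂ) → (Fin N → ℂ) → (Fin N → ℂ) → (Fin N → ℂ) → ℂ →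
      Matrix (Fin 2) (Fin 2) ℂ)
    (hL : ∀ P Q Ph Qh μ, L P Q Ph Qh μ =
      !![(1 : ℂ)/2, 0; 0, -(1 : ℂ)/2]
      + ∑ j, (μ - α j)⁻¹ • !![P j * Q j, -(P j)^2; (Q j)^2, -(P j * Q j)]
      + ∑ j, (μ + α j)⁻¹ • !![-(Ph j * Qh j), -ε * (Ph j)^2; ε * (Qh j)^2, Ph j * Qh j]) :
    L p q ph qh lam = !![-ε, 0; 0, 1] * L ph qh p q (-lam) * !![-ε, 0; 0, 1] := by
  have hee : ε * ε = 1 := by rw [← sq]; exact hε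
  rw [hL, hL]
  ext i j
  fin_cases i <;> fin_cases j <;>
    simp [Matrix.mul_apply, Matrix.sum_apply, Fin.sum_univ_two, Finset.mul_sum,
      Finset.sum_mul, mul_add, add_mul, mul_comm, mul_left_comm] <;>
    simp only [show ∀ x : Fin N, -lam - α x = -(lam + α x) from fun x => by ring,
      show ∀ x : Fin N, -lam + α x = -(lam - α x) from fun x => by ring, inv_neg,
      ← mul_assoc, hee, one_mul, mul_neg, neg_mul, neg_neg, Finset.sum_neg_distrib] <;>
    ring_nf
end

section
/- Let B be a symmetric complex g×g matrix with positive definite imaginary part satisfying conj(B) = -B - 𝒯ᵀ, where 𝒯 is the integer matrix with 0 on the diagonal and 1 elsewhere. Then the Riemann theta function θ with period matrix B satisfies conj(θ(ξ)) = θ(conj(ξ)) for all ξ ∈ ℂ^g. -/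
open Complex Matrix

-- pointwise key lemma
theorem key_term
    (g : ℕ) (B : Matrix (Fin g) (Fin g) ℂ)
    (T : Matrix (Fin g) (Fin g) ℂ)
    (hT : ∀ j k, T j k = if j = k then 0 else 1)
    (hB : ∀ j k, (starRingEnd ℂ) (B j k) = -B j k - Tᵀ j k)
    (ξ : Fin g → ℂ) (z : Fin g → ℤ) :
    (starRingEnd ℂ) (Complex.exp ((Real.pi : ℂ) * Complex.I *
        ((∑ j, (∑ k, B j k * (z k : ℂ)) * (z j : ℂ)) + 2 * ∑ j, ξ j * (z j : ℂ))))
    = Complex.exp ((Real.pi : ℂ) * Complex.I *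
        ((∑ j, (∑ k, B j k * (((-z) k : ℤ) : ℂ)) * (((-z) j : ℤ) : ℂ))
          + 2 * ∑ j, (starRingEnd ℂ) (ξ j) * (((-z) j : ℤ) : ℂ))) := by
  set Q := ∑ j, (∑ k, B j k * (z k : ℂ)) * (z j : ℂ) with hQdef
  set S := ∑ j, (∑ k, Tᵀ j k * (z k : ℂ)) * (z j : ℂ) with hSdef
  set L := ∑ j, ξ j * (z j : ℂ) with hLdef
  -- quadratic part invariant under negation
  have hQneg : (∑ j, (∑ k, B j k * (((-z) k : ℤ) : ℂ)) * (((-z) j : ℤ) : ℂ)) = Q := by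
    simp [Pi.neg_apply, mul_neg, neg_mul, neg_neg, Finset.sum_neg_distrib]
    exact hQdef.symm
  -- conj of Q
  have hQc : (starRingEnd ℂ) Q = -Q - S := by
    rw [hQdef, map_sum]
    have h1 : ∀ j : Fin g, (starRingEnd ℂ) ((∑ k, B j k * (z k : ℂ)) * (z j : ℂ))
        = (∑ k, (-B j k - Tᵀ j k) * (z k : ℂ)) * (z j : ℂ) := by
      intro j
      simp [map_sum, _root_.map_mul, hB]
    simp only [h1, sub_mul, neg_mul, Finset.sum_sub_distrib, Finset.sum_neg_distrib]
    try ring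
  -- S as integer
  have hS : S = (((∑ j, z j) ^ 2 - ∑ j, (z j) ^ 2 : ℤ) : ℂ) := by
    rw [hSdef]
    have h2 : ∀ j : Fin g, (∑ k, Tᵀ j k * (z k : ℂ)) = (∑ k, (z k : ℂ)) - (z j : ℂ) := by
      intro j
      have hk : ∀ k : Fin g, Tᵀ j k * (z k : ℂ) = (z k : ℂ) - (if k = j then (z k : ℂ) else 0) := by
        intro k
        rw [Matrix.transpose_apply, hT]
        rcases eq_or_ne k j with h | h <;> simp [h]
      rw [Finset.sum_congr rfl fun k _ => hk k, Finset.sum_sub_distrib, Finset.sum_ite_eq']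
      simp
    push_cast
    rw [Finset.sum_congr rfl fun j _ => congrArg (· * (z j : ℂ)) (h2 j)]
    simp only [sub_mul, Finset.sum_sub_distrib, ← Finset.sum_mul, pow_two, ← Finset.mul_sum]
  -- evenness
  have heven : (2 : ℤ) ∣ ((∑ j, z j) ^ 2 - ∑ j, (z j) ^ 2) := by
    have h1 : (2 : ℤ) ∣ ((∑ j, z j) ^ 2 - (∑ j, z j)) := by
      have h := Int.even_mul_succ_self ((∑ j, z j) - 1)
      have he : (∑ j, z j) ^ 2 - (∑ j, z j) = ((∑ j, z j) - 1) * (((∑ j, z j) - 1) + 1) := by ring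
      rw [he]; exact h.two_dvd
    have h2 : (2 : ℤ) ∣ ∑ j, ((z j) ^ 2 - z j) := by
      refine Finset.dvd_sum fun j _ => ?_
      have h := Int.even_mul_succ_self ((z j) - 1)
      have he : (z j) ^ 2 - z j = ((z j) - 1) * (((z j) - 1) + 1) := by ring
      rw [he]; exact h.two_dvd
    have he : (∑ j, z j) ^ 2 - ∑ j, (z j) ^ 2
        = ((∑ j, z j) ^ 2 - (∑ j, z j)) - (∑ j, ((z j) ^ 2 - z j)) := by
      rw [Finset.sum_sub_distrib]; ring
    rw [he]; exact dvd_sub h1 h2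
  obtain ⟨t, ht⟩ := heven
  rw [← Complex.exp_conj]
  have hE : (starRingEnd ℂ) ((Real.pi : ℂ) * Complex.I * (Q + 2 * L))
      = (Real.pi : ℂ) * Complex.I *
          ((∑ j, (∑ k, B j k * (((-z) k : ℤ) : ℂ)) * (((-z) j : ℤ) : ℂ))
            + 2 * ∑ j, (starRingEnd ℂ) (ξ j) * (((-z) j : ℤ) : ℂ))
        + (t : ℂ) * (2 * (Real.pi : ℂ) * Complex.I) := by
    have hL : (starRingEnd ℂ) L = ∑ j, (starRingEnd ℂ) (ξ j) * (z j : ℂ) := by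
      rw [hLdef, map_sum]; simp
    rw [_root_.map_mul, _root_.map_mul, map_add, _root_.map_mul, hQc, hL, Complex.conj_I, Complex.conj_ofReal,
      map_ofNat, hQneg, hS, ht]
    simp only [Pi.neg_apply, Int.cast_neg, Int.cast_mul, Int.cast_ofNat, mul_neg,
      Finset.sum_neg_distrib]
    push_cast
    ring
  rw [hE, Complex.exp_add, Complex.exp_int_mul_two_pi_mul_I, mul_one]

/-- if `conj B = -B - 𝒯ᵀ` with `𝒯` the matrix with `0` on the diagonal
and `1` elsewhere, then the Riemann theta function satisfies
`conj (θ ξ) = θ (conj ξ)`. -/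
theorem riemann_theta_conj_symmetry
    (g : ℕ) (B : Matrix (Fin g) (Fin g) ℂ) (hsym : B.IsSymm)
    (hpos : Matrix.PosDef (Matrix.of fun i j => (B i j).im))
    (T : Matrix (Fin g) (Fin g) ℂ)
    (hT : ∀ j k, T j k = if j = k then 0 else 1)
    (hB : ∀ j k, (starRingEnd ℂ) (B j k) = -B j k - Tᵀ j k)
    (θ : (Fin g → ℂ) → ℂ)
    (hθ : ∀ ξ : Fin g → ℂ, θ ξ = ∑' z : Fin g → ℤ,
      Complex.exp ((Real.pi : ℂ) * Complex.I *
        ((∑ j, (∑ k, B j k * (z k : ℂ)) * (z j : ℂ)) + 2 * ∑ j, ξ j * (z j : ℂ)))) :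
    ∀ ξ : Fin g → ℂ, (starRingEnd ℂ) (θ ξ) = θ (fun j => (starRingEnd ℂ) (ξ j)) := by
  intro ξ
  rw [hθ ξ, hθ]
  rw [starRingEnd_apply, tsum_star]
  rw [← (Equiv.neg (Fin g → ℤ)).tsum_eq (fun z : Fin g → ℤ =>
      Complex.exp ((Real.pi : ℂ) * Complex.I *
        ((∑ j, (∑ k, B j k * (z k : ℂ)) * (z j : ℂ))
          + 2 * ∑ j, (starRingEnd ℂ) (ξ j) * (z j : ℂ))))]
  refine tsum_congr fun z => ?_
  have := key_term g B T hT hB ξ z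
  simpa using this
end

section
/- Suppose functions u, v : ℝ × ℝ → ℂ are given by u(x,t) = u₀ e^{N₂t} θ(Ω₁x + iΩ₂t + D + Δ)θ(D) / (θ(Ω₁x + iΩ₂t + D)θ(D+Δ)) with θ satisfying θ(ξ+n) = θ(ξ) for n ∈ ℤ^g, θ(ξ+Bm) = θ(ξ)exp(-πi⟨Bm,m⟩ - 2πi⟨m,ξ⟩) for m ∈ ℤ^g, and θ(𝒮ᵀξ) = θ(ξ). Assume 𝒮ᵀΩ₁ = -Ω₁, 𝒮ᵀΩ₂ = Ω₂, 𝒮ᵀΔ = Δ + e, and D = 𝒮ᵀD + BM + W with M, W ∈ ℤ^g, 𝒮M = -M, 𝒮ᵀW = -W. Then u(x,t)/u(-x,t) = exp(2πi⟨M, 𝒮ᵀΔ⟩), independent of (x,t). -/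
open Finset Matrix Complex

lemma aux_ratio_theta (A X Y Z W E1 E2 : ℂ) (hA : A ≠ 0) (hX : X ≠ 0) (hY : Y ≠ 0)
    (hZ : Z ≠ 0) (hW : W ≠ 0) (hE1 : E1 ≠ 0) (hE2 : E2 ≠ 0) :
    (A * X * Z) / (Y * W) / ((A * (X * E2) * Z) / ((Y * E1) * W)) = E1 / E2 := by
  rw [div_div_div_eq, div_eq_div_iff (mul_ne_zero (mul_ne_zero hY hW) (mul_ne_zero (mul_ne_zero hA (mul_ne_zero hX hE2)) hZ)) hE2]
  ring

/-- under the symmetries induced by the holomorphic involution,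
the ratio `u(x,t)/u(-x,t)` of the algebro-geometric solution is the constant
`exp(2πi⟨M, 𝒮ᵀΔ⟩)`. -/
theorem algebro_geometric_ratio_constant
    (g : ℕ) (hg : Odd g)
    (B : Matrix (Fin g) (Fin g) ℂ) (hBsym : B.IsSymm)
    (hpos : Matrix.PosDef (Matrix.of fun i j => (B i j).im))
    (S : Matrix (Fin g) (Fin g) ℂ)
    (hS : ∀ j k : Fin g, S j k = if j = Fin.rev k then -1 else 0)
    (hBS : B * S = Sᵀ * B)
    (θ : (Fin g → ℂ) → ℂ)
    (hper1 : ∀ (ξ : Fin g → ℂ) (n : Fin g → ℤ), θ (fun j => ξ j + (n j : ℂ)) = θ ξ)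
    (hper2 : ∀ (ξ : Fin g → ℂ) (m : Fin g → ℤ),
      θ (fun j => ξ j + ∑ k, B j k * (m k : ℂ)) =
        θ ξ * Complex.exp (-(Real.pi : ℂ) * Complex.I *
            (∑ j, (∑ k, B j k * (m k : ℂ)) * (m j : ℂ))
          - 2 * (Real.pi : ℂ) * Complex.I * ∑ j, (m j : ℂ) * ξ j))
    (hSinv : ∀ ξ : Fin g → ℂ, θ (fun j => ∑ k, S k j * ξ k) = θ ξ)
    (Ω₁ Ω₂ D Δ : Fin g → ℂ)
    (hΩ₁ : ∀ j : Fin g, ∑ k, S k j * Ω₁ k = -Ω₁ j)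
    (hΩ₂ : ∀ j : Fin g, ∑ k, S k j * Ω₂ k = Ω₂ j)
    (hΔ : ∀ j : Fin g, ∑ k, S k j * Δ k = Δ j + 1)
    (M W : Fin g → ℤ)
    (hM : ∀ j : Fin g, ∑ k, S j k * (M k : ℂ) = -(M j : ℂ))
    (hW : ∀ j : Fin g, ∑ k, S k j * (W k : ℂ) = -(W j : ℂ))
    (hD : ∀ j : Fin g, D j =
      (∑ k, S k j * D k) + (∑ k, B j k * (M k : ℂ)) + (W j : ℂ))
    (u₀ N₂ : ℂ) (hu₀ : u₀ ≠ 0)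
    (u : ℝ × ℝ → ℂ)
    (hu : ∀ x t : ℝ, u (x, t) = u₀ * Complex.exp (N₂ * t) *
      θ (fun j => Ω₁ j * x + Complex.I * Ω₂ j * t + D j + Δ j) * θ D /
      (θ (fun j => Ω₁ j * x + Complex.I * Ω₂ j * t + D j) *
        θ (fun j => D j + Δ j)))
    (hθne : ∀ x t : ℝ,
      θ (fun j => Ω₁ j * x + Complex.I * Ω₂ j * t + D j) ≠ 0 ∧
      θ (fun j => Ω₁ j * x + Complex.I * Ω₂ j * t + D j + Δ j) ≠ 0) :
    ∀ x t : ℝ, u (x, t) / u (-x, t) =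
      Complex.exp (2 * (Real.pi : ℂ) * Complex.I *
        ∑ j, (M j : ℂ) * (∑ k, S k j * Δ k)) := by
  intro x t
  set Q : ℂ := ∑ j, (∑ k, B j k * (M k : ℂ)) * (M j : ℂ) with hQ
  have key : ∀ ζ : Fin g → ℂ,
      θ (fun j => ζ j - ∑ k, B j k * (M k : ℂ)) =
        θ ζ * Complex.exp (-(Real.pi : ℂ) * Complex.I * Q
          + 2 * (Real.pi : ℂ) * Complex.I * ∑ j, (M j : ℂ) * ζ j) := by
    intro ζ
    have h := hper2 ζ (fun k => -M k)
    push_cast at h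
    have e1 : (fun j => ζ j + ∑ k, B j k * (-(M k : ℂ)))
        = fun j => ζ j - ∑ k, B j k * (M k : ℂ) := by
      funext j
      rw [sub_eq_add_neg, ← Finset.sum_neg_distrib]
      congr 1
      exact Finset.sum_congr rfl fun k _ => by ring
    rw [e1] at h
    rw [h]
    congr 1
    rw [hQ]
    rw [show (∑ j, (∑ k, B j k * (-(M k:ℂ))) * (-(M j:ℂ)))
        = ∑ j, (∑ k, B j k * (M k : ℂ)) * (M j : ℂ) from
      Finset.sum_congr rfl fun j _ => by
        simp only [mul_neg, Finset.sum_neg_distrib, neg_mul, neg_neg]]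
    rw [show (∑ j, -(M j:ℂ) * ζ j) = -∑ j, (M j:ℂ) * ζ j from by
      rw [← Finset.sum_neg_distrib]; exact Finset.sum_congr rfl fun j _ => by ring]
    ring
  -- the Sᵀ action on the phase at (-x, t)
  have hSD : ∀ j, ∑ k, S k j * D k = D j - (∑ k, B j k * (M k:ℂ)) - (W j : ℂ) := by
    intro j
    have := hD j
    linear_combination -this
  have hlin : ∀ j, ∑ k, S k j * (Ω₁ k * (-(x:ℂ)) + Complex.I * Ω₂ k * t + D k)
      = (Ω₁ j * x + Complex.I * Ω₂ j * t + D j)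
        - (∑ k, B j k * (M k:ℂ)) - (W j : ℂ) := by
    intro j
    have e : ∑ k, S k j * (Ω₁ k * (-(x:ℂ)) + Complex.I * Ω₂ k * t + D k)
        = (-(x:ℂ)) * (∑ k, S k j * Ω₁ k) + Complex.I * (t:ℂ) * (∑ k, S k j * Ω₂ k)
          + ∑ k, S k j * D k := by
      rw [Finset.mul_sum, Finset.mul_sum, ← Finset.sum_add_distrib, ← Finset.sum_add_distrib]
      exact Finset.sum_congr rfl fun k _ => by ring
    rw [e, hΩ₁ j, hΩ₂ j, hSD j]
    ring
  -- first theta identity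
  have hA : θ (fun j => Ω₁ j * ((-x : ℝ) : ℂ) + Complex.I * Ω₂ j * t + D j)
      = θ (fun j => Ω₁ j * x + Complex.I * Ω₂ j * t + D j) *
        Complex.exp (-(Real.pi : ℂ) * Complex.I * Q
          + 2 * (Real.pi : ℂ) * Complex.I *
            ∑ j, (M j : ℂ) * (Ω₁ j * x + Complex.I * Ω₂ j * t + D j)) := by
    have h1 := hSinv (fun k => Ω₁ k * ((-x : ℝ) : ℂ) + Complex.I * Ω₂ k * t + D k)
    have e2 : (fun j => ∑ k, S k j * (Ω₁ k * ((-x : ℝ) : ℂ) + Complex.I * Ω₂ k * t + D k))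
        = fun j => (Ω₁ j * x + Complex.I * Ω₂ j * t + D j - ∑ k, B j k * (M k:ℂ))
            + ((-W j : ℤ) : ℂ) := by
      funext j
      push_cast
      rw [hlin j]
      ring
    rw [e2] at h1
    have h2 := hper1 (fun j => Ω₁ j * x + Complex.I * Ω₂ j * t + D j - ∑ k, B j k * (M k:ℂ))
      (fun j => -W j)
    rw [← h1, h2]
    exact key _
  -- second theta identity
  have hB' : θ (fun j => Ω₁ j * ((-x : ℝ) : ℂ) + Complex.I * Ω₂ j * t + D j + Δ j)
      = θ (fun j => Ω₁ j * x + Complex.I * Ω₂ j * t + D j + Δ j) *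
        Complex.exp (-(Real.pi : ℂ) * Complex.I * Q
          + 2 * (Real.pi : ℂ) * Complex.I *
            ∑ j, (M j : ℂ) * (Ω₁ j * x + Complex.I * Ω₂ j * t + D j + Δ j)) := by
    have h1 := hSinv (fun k => Ω₁ k * ((-x : ℝ) : ℂ) + Complex.I * Ω₂ k * t + D k + Δ k)
    have e3 : (fun j => ∑ k, S k j * (Ω₁ k * ((-x : ℝ) : ℂ) + Complex.I * Ω₂ k * t + D k + Δ k))
        = fun j => (Ω₁ j * x + Complex.I * Ω₂ j * t + D j + Δ j - ∑ k, B j k * (M k:ℂ))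
            + ((1 - W j : ℤ) : ℂ) := by
      funext j
      have e : ∑ k, S k j * (Ω₁ k * ((-x : ℝ) : ℂ) + Complex.I * Ω₂ k * t + D k + Δ k)
          = (∑ k, S k j * (Ω₁ k * (-(x:ℂ)) + Complex.I * Ω₂ k * t + D k))
            + ∑ k, S k j * Δ k := by
        push_cast
        rw [← Finset.sum_add_distrib]
        exact Finset.sum_congr rfl fun k _ => by ring
      rw [e, hlin j, hΔ j]
      push_cast
      ring
    rw [e3] at h1
    have h2 := hper1
      (fun j => Ω₁ j * x + Complex.I * Ω₂ j * t + D j + Δ j - ∑ k, B j k * (M k:ℂ))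
      (fun j => 1 - W j)
    rw [← h1, h2]
    exact key _
  -- nonvanishing
  have h1 : θ (fun j => Ω₁ j * x + Complex.I * Ω₂ j * t + D j) ≠ 0 := (hθne x t).1
  have h2 : θ (fun j => Ω₁ j * x + Complex.I * Ω₂ j * t + D j + Δ j) ≠ 0 := (hθne x t).2
  have hD0 : θ D ≠ 0 := by
    have h := (hθne 0 0).1
    have e : (fun j => Ω₁ j * ((0:ℝ):ℂ) + Complex.I * Ω₂ j * ((0:ℝ):ℂ) + D j) = D := by
      funext j; push_cast; ring
    rwa [e] at h
  have hDΔ0 : θ (fun j => D j + Δ j) ≠ 0 := by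
    have h := (hθne 0 0).2
    have e : (fun j => Ω₁ j * ((0:ℝ):ℂ) + Complex.I * Ω₂ j * ((0:ℝ):ℂ) + D j + Δ j)
        = fun j => D j + Δ j := by
      funext j; push_cast; ring
    rwa [e] at h
  -- sum identities
  have hsum : ∑ j, (M j:ℂ) * (∑ k, S k j * Δ k) = -∑ j, (M j:ℂ) * Δ j := by
    have e : ∑ j, (M j:ℂ) * (∑ k, S k j * Δ k)
        = ∑ k, (∑ j, S k j * (M j:ℂ)) * Δ k := by
      simp_rw [Finset.mul_sum, Finset.sum_mul]
      rw [Finset.sum_comm]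
      exact Finset.sum_congr rfl fun k _ => Finset.sum_congr rfl fun j _ => by ring
    rw [e, show ∑ k, (∑ j, S k j * (M j:ℂ)) * Δ k = ∑ k, (-(M k:ℂ)) * Δ k from
      Finset.sum_congr rfl fun k _ => by rw [hM k], ← Finset.sum_neg_distrib]
    exact Finset.sum_congr rfl fun k _ => by ring
  have hsplit : ∑ j, (M j:ℂ) * (Ω₁ j * x + Complex.I * Ω₂ j * t + D j + Δ j)
      = (∑ j, (M j:ℂ) * (Ω₁ j * x + Complex.I * Ω₂ j * t + D j)) + ∑ j, (M j:ℂ) * Δ j := by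
    rw [← Finset.sum_add_distrib]
    exact Finset.sum_congr rfl fun j _ => by ring
  -- final assembly
  rw [hu x t, hu (-x) t, hA, hB']
  have hexp : Complex.exp (N₂ * t) ≠ 0 := Complex.exp_ne_zero _
  have hE1 : Complex.exp (-(Real.pi : ℂ) * Complex.I * Q
      + 2 * (Real.pi : ℂ) * Complex.I *
        ∑ j, (M j : ℂ) * (Ω₁ j * x + Complex.I * Ω₂ j * t + D j)) ≠ 0 :=
    Complex.exp_ne_zero _
  have hE2 : Complex.exp (-(Real.pi : ℂ) * Complex.I * Q
      + 2 * (Real.pi : ℂ) * Complex.I *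
        ∑ j, (M j : ℂ) * (Ω₁ j * x + Complex.I * Ω₂ j * t + D j + Δ j)) ≠ 0 :=
    Complex.exp_ne_zero _
  rw [show (2 * (Real.pi : ℂ) * Complex.I * ∑ j, (M j : ℂ) * (∑ k, S k j * Δ k))
      = (-(Real.pi : ℂ) * Complex.I * Q
          + 2 * (Real.pi : ℂ) * Complex.I *
            ∑ j, (M j : ℂ) * (Ω₁ j * x + Complex.I * Ω₂ j * t + D j))
        - (-(Real.pi : ℂ) * Complex.I * Q
          + 2 * (Real.pi : ℂ) * Complex.I *
            ∑ j, (M j : ℂ) * (Ω₁ j * x + Complex.I * Ω₂ j * t + D j + Δ j)) from by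
    linear_combination (2 * (Real.pi : ℂ) * Complex.I) * hsum
      + (2 * (Real.pi : ℂ) * Complex.I) * hsplit, Complex.exp_sub]
  exact aux_ratio_theta _ _ _ _ _ _ _ (mul_ne_zero hu₀ hexp) h2 h1 hD0 hDΔ0 hE1 hE2
end
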